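/- The signed Stirling numbers of the first kind satisfy, for n ≥ k ≥ 1: k·s(n,k) = n · Σ_{i=0}^{n−k} C(n−1,i) · ((−1)^i · i!/(i+1)) · s(n−1−i, k−1). -/

import Mathlib

/-- Signed Stirling numbers of the first kind, via the recurrence
`s(n+1,k) = s(n,k-1) - n·s(n,k)`. -/
def stirling1 : ℕ → ℕ → ℤ
  | 0, 0 => 1
  | 0, _ + 1 => 0
  | n + 1, 0 => -(n : ℤ) * stirling1 n 0
  | n + 1, k + 1 => stirling1 n k - (n : ℤ) * stirling1 n (k + 1)

lemma stirling1_succ_succ (n k : ℕ) :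
    stirling1 (n + 1) (k + 1) = stirling1 n k - (n : ℤ) * stirling1 n (k + 1) := rfl

lemma stirling1_eq_zero : ∀ {n k : ℕ}, n < k → stirling1 n k = 0
  | 0, _ + 1, _ => rfl
  | n + 1, k + 1, h => by
      rw [stirling1_succ_succ, stirling1_eq_zero (by omega : n < k),
        stirling1_eq_zero (by omega : n < k + 1)]
      ring

lemma stirling1_succ_zero : ∀ n : ℕ, stirling1 (n + 1) 0 = 0
  | 0 => by simp [stirling1]
  | n + 1 => by
      show -((n + 1 : ℕ) : ℤ) * stirling1 (n + 1) 0 = 0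
      rw [stirling1_succ_zero n]; ring

lemma stirling1_one (n : ℕ) : stirling1 (n + 1) 1 = (-1) ^ n * n.factorial := by
  induction n with
  | zero => simp [stirling1]
  | succ m ih =>
      rw [stirling1_succ_succ, stirling1_succ_zero, ih, Nat.factorial_succ]
      push_cast; ring

/-- coefficient `(-1)^i n! / ((n-1-i)! (i+1))` -/
def dcoef (n i : ℕ) : ℚ :=
  (-1 : ℚ) ^ i * (n.factorial : ℚ) / (((n - 1 - i).factorial : ℚ) * ((i : ℚ) + 1))

lemma stirling1_key (n : ℕ) : ∀ k : ℕ, 1 ≤ k →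
    (k : ℚ) * (stirling1 n k : ℚ) =
      ∑ i ∈ Finset.range n, dcoef n i * (stirling1 (n - 1 - i) (k - 1) : ℚ) := by
  induction n with
  | zero =>
      intro k hk
      rw [stirling1_eq_zero (by omega : 0 < k)]
      simp
  | succ n ih =>
      intro k hk
      rcases Nat.lt_or_ge k 2 with hk1 | hk2
      · -- k = 1
        have hk' : k = 1 := by omega
        subst hk'
        rw [Finset.sum_eq_single_of_mem n (Finset.self_mem_range_succ n) ?_]
        · simp only [Nat.add_sub_cancel, Nat.sub_self, dcoef]
          rw [show stirling1 0 (1 - 1) = 1 from rfl, stirling1_one, Nat.factorial_succ]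
          have hn : ((n.factorial : ℚ)) ≠ 0 := Nat.cast_ne_zero.mpr n.factorial_ne_zero
          push_cast
          rw [show ((0:ℕ).factorial : ℚ) = 1 by norm_num]
          field_simp
        · intro i hi hne
          have hi' : i < n + 1 := Finset.mem_range.mp hi
          have h1 : n + 1 - 1 - i = (n - i - 1) + 1 := by omega
          rw [h1, show (1:ℕ) - 1 = 0 from rfl, stirling1_succ_zero]
          simp
      · obtain ⟨j, rfl⟩ : ∃ j, k = j + 2 := ⟨k - 2, by omega⟩
        have IH1 := ih (j + 1) (by omega)
        have IH2 := ih (j + 2) (by omega)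
        simp only [Nat.add_sub_cancel, show j + 2 - 1 = j + 1 from rfl,
          show j + 1 - 1 = j from rfl] at IH1 IH2 ⊢
        have hrec : (stirling1 (n + 1) (j + 2) : ℚ)
            = (stirling1 n (j + 1) : ℚ) - (n : ℚ) * (stirling1 n (j + 2) : ℚ) := by
          rw [show (j + 2) = (j + 1) + 1 from rfl, stirling1_succ_succ]
          push_cast; ring
        have F3 : ∑ i ∈ Finset.range n, dcoef n i * (stirling1 (n - 1 - i) j : ℚ)
            = ∑ i ∈ Finset.range n, dcoef n i * (stirling1 (n - i) (j + 1) : ℚ)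
              + ∑ i ∈ Finset.range n,
                  (dcoef n i * ((n - 1 - i : ℕ) : ℚ)) * (stirling1 (n - 1 - i) (j + 1) : ℚ) := by
          rw [← Finset.sum_add_distrib]
          apply Finset.sum_congr rfl
          intro i hi
          have hi' : i < n := Finset.mem_range.mp hi
          have h1 : n - i = (n - 1 - i) + 1 := by omega
          rw [h1, stirling1_succ_succ]
          push_cast; ring
        have F4 : ∑ i ∈ Finset.range n, dcoef n i * (stirling1 (n - i) (j + 1) : ℚ)
            = ∑ i ∈ Finset.range n, dcoef n (i + 1) * (stirling1 (n - 1 - i) (j + 1) : ℚ)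
              + (n : ℚ) * (stirling1 n (j + 1) : ℚ) := by
          cases n with
          | zero =>
              simp only [Finset.range_zero, Finset.sum_empty, Nat.cast_zero, zero_mul, add_zero]
          | succ m =>
              rw [Finset.sum_range_succ'
                  (fun i => dcoef (m + 1) i * (stirling1 (m + 1 - i) (j + 1) : ℚ)) m,
                Finset.sum_range_succ
                  (fun i => dcoef (m + 1) (i + 1) * (stirling1 (m + 1 - 1 - i) (j + 1) : ℚ)) m,
                Finset.sum_congr rfl (fun i _ => by
                  rw [show m + 1 - (i + 1) = m + 1 - 1 - i from by omega])]
              simp only [Nat.add_sub_cancel, Nat.sub_zero, Nat.sub_self]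
              rw [stirling1_eq_zero (by omega : 0 < j + 1)]
              have hd0 : dcoef (m + 1) 0 = ((m : ℚ) + 1) := by
                simp only [dcoef, Nat.add_sub_cancel, Nat.sub_zero, Nat.factorial_succ]
                have : ((m.factorial : ℚ)) ≠ 0 := Nat.cast_ne_zero.mpr m.factorial_ne_zero
                push_cast
                field_simp
                ring
              rw [hd0]
              push_cast
              ring
        have F5 : ∑ i ∈ Finset.range (n + 1), dcoef (n + 1) i * (stirling1 (n - i) (j + 1) : ℚ)
            = ∑ i ∈ Finset.range n, dcoef (n + 1) (i + 1) * (stirling1 (n - 1 - i) (j + 1) : ℚ)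
              + ((n : ℚ) + 1) * (stirling1 n (j + 1) : ℚ) := by
          rw [Finset.sum_range_succ'
              (fun i => dcoef (n + 1) i * (stirling1 (n - i) (j + 1) : ℚ)) n,
            Finset.sum_congr rfl (fun i _ => by
              rw [show n - (i + 1) = n - 1 - i from by omega])]
          simp only [Nat.sub_zero]
          have hD0 : dcoef (n + 1) 0 = ((n : ℚ) + 1) := by
            simp only [dcoef, Nat.add_sub_cancel, Nat.sub_zero, Nat.factorial_succ]
            have : ((n.factorial : ℚ)) ≠ 0 := Nat.cast_ne_zero.mpr n.factorial_ne_zero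
            push_cast
            field_simp
            ring
          rw [hD0]
        have F6 : ∑ i ∈ Finset.range n, dcoef n (i + 1) * (stirling1 (n - 1 - i) (j + 1) : ℚ)
              + ∑ i ∈ Finset.range n,
                  (dcoef n i * ((n - 1 - i : ℕ) : ℚ)) * (stirling1 (n - 1 - i) (j + 1) : ℚ)
              - (n : ℚ) * ∑ i ∈ Finset.range n, dcoef n i * (stirling1 (n - 1 - i) (j + 1) : ℚ)
            = ∑ i ∈ Finset.range n, dcoef (n + 1) (i + 1) * (stirling1 (n - 1 - i) (j + 1) : ℚ) := by
          rw [Finset.mul_sum, ← Finset.sum_add_distrib, ← Finset.sum_sub_distrib]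
          apply Finset.sum_congr rfl
          intro i hi
          have hi' : i < n := Finset.mem_range.mp hi
          by_cases hlast : i = n - 1
          · have h0 : n - 1 - i = 0 := by omega
            rw [h0, stirling1_eq_zero (by omega : 0 < j + 1)]
            push_cast; ring
          · obtain ⟨a, rfl⟩ : ∃ a, n = a + i + 2 := ⟨n - i - 2, by omega⟩
            have h1 : a + i + 2 - 1 - i = a + 1 := by omega
            have h2 : a + i + 2 - 1 - (i + 1) = a := by omega
            have h3 : a + i + 2 + 1 - 1 - (i + 1) = a + 1 := by omega
            simp only [dcoef, h1, h2, h3]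
            have ha : ((a.factorial : ℚ)) ≠ 0 := Nat.cast_ne_zero.mpr a.factorial_ne_zero
            have ha1 : (((a + 1).factorial : ℚ)) ≠ 0 :=
              Nat.cast_ne_zero.mpr (a + 1).factorial_ne_zero
            have hi1 : ((i : ℚ) + 1) ≠ 0 := by positivity
            have hi2 : ((i : ℚ) + 1 + 1) ≠ 0 := by positivity
            rw [show (a + i + 2 + 1).factorial = (a + i + 2 + 1) * (a + i + 2).factorial from
              Nat.factorial_succ _, Nat.factorial_succ a]
            push_cast
            field_simp
            ring
        push_cast at IH1 IH2 ⊢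
        linear_combination ((j : ℚ) + 2) * hrec + IH1 + F3 + F4 + F6 - (n : ℚ) * IH2 - F5

/-- Recurrence for the signed Stirling numbers of the first kind:
`k·s(n,k) = n·Σ_{i=0}^{n-k} C(n-1,i)·((-1)^i i!/(i+1))·s(n-1-i,k-1)` for `n ≥ k ≥ 1`. -/
theorem stirling1_recurrence (n k : ℕ) (hk : 1 ≤ k) (hkn : k ≤ n) :
    (k : ℚ) * (stirling1 n k : ℚ) =
      (n : ℚ) * ∑ i ∈ Finset.range (n - k + 1),
        ((n - 1).choose i : ℚ) * ((-1 : ℚ) ^ i * (i.factorial : ℚ) / (i + 1)) *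
          (stirling1 (n - 1 - i) (k - 1) : ℚ) := by
  rw [stirling1_key n k hk, Finset.mul_sum]
  have hsub : Finset.range (n - k + 1) ⊆ Finset.range n := by
    intro x hx
    simp only [Finset.mem_range] at *
    omega
  rw [Finset.sum_subset hsub ?_]
  · apply Finset.sum_congr rfl
    intro i hi
    have hi' : i < n := Finset.mem_range.mp hi
    have hile : i ≤ n - 1 := by omega
    rw [Nat.cast_choose ℚ hile]
    have hfact : ((n.factorial : ℚ)) = (n : ℚ) * (((n - 1).factorial : ℚ)) := by
      rw [show n = (n - 1) + 1 from by omega, Nat.factorial_succ]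
      push_cast
      ring
    have h1 : ((i.factorial : ℚ)) ≠ 0 := Nat.cast_ne_zero.mpr i.factorial_ne_zero
    have h2 : (((n - 1 - i).factorial : ℚ)) ≠ 0 :=
      Nat.cast_ne_zero.mpr (n - 1 - i).factorial_ne_zero
    have h3 : ((i : ℚ) + 1) ≠ 0 := by positivity
    rw [dcoef, hfact]
    field_simp
  · intro i hi hni
    simp only [Finset.mem_range] at hi hni
    rw [stirling1_eq_zero (by omega : n - 1 - i < k - 1)]
    simp
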